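/- For every integer n ≥ 1 and every real number x, 𝔠_n(x) = x · ∑_{k=0}^{n−1} binom(n,k) ∑_{j=0}^{k} binom(k,j) · (−1/2)^{k−j} · 𝔠_j(x), and equivalently 𝔠_n(x) = x · ∑_{j=0}^{n−1} binom(n,j) · δ[0^{n−j}] · 𝔠_j(x), where δ[0^{m}] := (1/2)^m − (−1/2)^m. -/

import Mathlib

open Nat Finset

/-- Central factorial numbers of the second kind. -/
noncomputable def centralT (n k : ℕ) : ℝ :=
  (1 / (k ! : ℝ)) * ∑ j ∈ Finset.range (k + 1),
    (-1 : ℝ) ^ j * (k.choose j : ℝ) * ((k : ℝ) / 2 - (j : ℝ)) ^ n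

/-- Central Fubini-like polynomials. -/
noncomputable def centralFubini (n : ℕ) (x : ℝ) : ℝ :=
  ∑ k ∈ Finset.range (n + 1), (k ! : ℝ) * centralT n k * x ^ k

/-! ### Auxiliary definitions and lemmas -/

/-- `aA n k = k! * T(n,k)`, the alternating binomial sum. -/
noncomputable def aA (n k : ℕ) : ℝ :=
  ∑ j ∈ Finset.range (k + 1), (-1 : ℝ) ^ j * (k.choose j : ℝ) * ((k : ℝ) / 2 - (j : ℝ)) ^ n

/-- `dd m = (1/2)^m - (-1/2)^m`. -/
noncomputable def dd (m : ℕ) : ℝ := (1 / 2 : ℝ) ^ m - (-1 / 2 : ℝ) ^ m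

lemma dd_zero : dd 0 = 0 := by simp [dd]

lemma alt_diff (k : ℕ) (f : ℕ → ℝ) :
    ∑ i ∈ Finset.range (k + 1), (-1 : ℝ) ^ i * (k.choose i : ℝ) * (f i - f (i + 1)) =
      ∑ i ∈ Finset.range (k + 2), (-1 : ℝ) ^ i * ((k + 1).choose i : ℝ) * f i := by
  rw [Finset.sum_range_succ' (fun i => (-1 : ℝ) ^ i * ((k + 1).choose i : ℝ) * f i) (k+1)]
  have h1 : ∀ i ∈ Finset.range (k+1),
      (-1:ℝ)^(i+1) * ((k+1).choose (i+1) : ℝ) * f (i+1)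
        = (-1:ℝ)^(i+1) * (k.choose i : ℝ) * f (i+1)
          + (-1:ℝ)^(i+1) * (k.choose (i+1) : ℝ) * f (i+1) := by
    intro i _
    rw [Nat.choose_succ_succ]
    push_cast
    ring
  rw [Finset.sum_congr rfl h1, Finset.sum_add_distrib]
  have lhs_eq : ∑ i ∈ Finset.range (k + 1), (-1 : ℝ) ^ i * (k.choose i : ℝ) * (f i - f (i + 1))
      = (∑ i ∈ Finset.range (k + 1), (-1 : ℝ) ^ i * (k.choose i : ℝ) * f i)
        + ∑ i ∈ Finset.range (k + 1), (-1 : ℝ) ^ (i+1) * (k.choose i : ℝ) * f (i+1) := by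
    rw [← Finset.sum_add_distrib]
    exact Finset.sum_congr rfl fun i _ => by ring
  rw [lhs_eq, Finset.sum_range_succ' (fun i => (-1 : ℝ) ^ i * (k.choose i : ℝ) * f i) k]
  have ext : ∑ i ∈ Finset.range k, (-1:ℝ)^(i+1) * (k.choose (i+1) : ℝ) * f (i+1)
      = ∑ i ∈ Finset.range (k+1), (-1:ℝ)^(i+1) * (k.choose (i+1) : ℝ) * f (i+1) := by
    rw [Finset.sum_range_succ]
    simp
  rw [ext]
  simp
  ring

lemma key_pow (n : ℕ) (y : ℝ) :
    ∑ j ∈ Finset.range (n + 1), (n.choose j : ℝ) * dd (n - j) * y ^ j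
      = (y + 1/2) ^ n - (y + (-1/2)) ^ n := by
  rw [add_pow y (1/2 : ℝ) n, add_pow y (-1/2 : ℝ) n, ← Finset.sum_sub_distrib]
  refine Finset.sum_congr rfl fun j _ => ?_
  unfold dd
  ring

lemma aA_succ (n k : ℕ) :
    aA n (k + 1) = ∑ j ∈ Finset.range (n + 1), (n.choose j : ℝ) * dd (n - j) * aA j k := by
  have step1 : ∑ j ∈ Finset.range (n + 1), (n.choose j : ℝ) * dd (n - j) * aA j k
      = ∑ i ∈ Finset.range (k + 1), (-1 : ℝ) ^ i * (k.choose i : ℝ) *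
          ∑ j ∈ Finset.range (n + 1), (n.choose j : ℝ) * dd (n - j) * ((k : ℝ) / 2 - (i : ℝ)) ^ j :=
    calc ∑ j ∈ Finset.range (n + 1), (n.choose j : ℝ) * dd (n - j) * aA j k
        = ∑ j ∈ Finset.range (n + 1), ∑ i ∈ Finset.range (k + 1),
            (-1 : ℝ) ^ i * (k.choose i : ℝ) *
              ((n.choose j : ℝ) * dd (n - j) * ((k : ℝ) / 2 - (i : ℝ)) ^ j) := by
          refine Finset.sum_congr rfl fun j _ => ?_
          unfold aA
          rw [Finset.mul_sum]
          exact Finset.sum_congr rfl fun i _ => by ring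
      _ = ∑ i ∈ Finset.range (k + 1), ∑ j ∈ Finset.range (n + 1),
            (-1 : ℝ) ^ i * (k.choose i : ℝ) *
              ((n.choose j : ℝ) * dd (n - j) * ((k : ℝ) / 2 - (i : ℝ)) ^ j) := Finset.sum_comm
      _ = _ := by
          refine Finset.sum_congr rfl fun i _ => ?_
          rw [Finset.mul_sum]
  rw [step1]
  have step2 : ∀ i ∈ Finset.range (k + 1),
      (-1 : ℝ) ^ i * (k.choose i : ℝ) *
          ∑ j ∈ Finset.range (n + 1), (n.choose j : ℝ) * dd (n - j) * ((k : ℝ) / 2 - (i : ℝ)) ^ j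
        = (-1 : ℝ) ^ i * (k.choose i : ℝ) *
            ((((k+1 : ℕ) : ℝ) / 2 - (i : ℝ)) ^ n - (((k+1 : ℕ) : ℝ) / 2 - ((i+1 : ℕ) : ℝ)) ^ n) := by
    intro i _
    rw [key_pow]
    congr 2 <;> push_cast <;> ring
  rw [Finset.sum_congr rfl step2, alt_diff k (fun i => (((k+1 : ℕ) : ℝ) / 2 - (i : ℝ)) ^ n)]
  unfold aA
  push_cast
  ring

lemma aA_eq_zero (m : ℕ) : ∀ j, j < m → aA j m = 0 := by
  induction m with
  | zero => intro j hj; omega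
  | succ m ih =>
    intro j hj
    rw [aA_succ]
    refine Finset.sum_eq_zero fun i hi => ?_
    rw [Finset.mem_range] at hi
    rcases eq_or_lt_of_le (Nat.lt_succ_iff.mp hi) with h | h
    · rw [h, Nat.sub_self, dd_zero]; ring
    · rw [ih i (by omega)]; ring

lemma centralFubini_eq_aA (n : ℕ) (x : ℝ) :
    centralFubini n x = ∑ k ∈ Finset.range (n + 1), aA n k * x ^ k := by
  refine Finset.sum_congr rfl fun k _ => ?_
  have hk : (k ! : ℝ) ≠ 0 := Nat.cast_ne_zero.mpr k.factorial_ne_zero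
  unfold centralT aA
  rw [← mul_assoc, mul_one_div, div_self hk, one_mul]

lemma partial_eq (j n : ℕ) (hj : j < n) (x : ℝ) :
    ∑ k ∈ Finset.range n, aA j k * x ^ k = centralFubini j x := by
  rw [centralFubini_eq_aA]
  refine (Finset.sum_subset (Finset.range_subset_range.mpr (by omega)) fun k hk hk' => ?_).symm
  rw [Finset.mem_range] at hk hk'
  rw [aA_eq_zero k j (by omega)]
  ring

lemma key2 (n : ℕ) (hn : 1 ≤ n) (x : ℝ) :
    centralFubini n x =
      x * ∑ j ∈ Finset.range n, (n.choose j : ℝ) * dd (n - j) * centralFubini j x := by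
  rw [centralFubini_eq_aA, Finset.sum_range_succ' (fun k => aA n k * x ^ k) n]
  have h0 : aA n 0 * x ^ 0 = 0 := by
    unfold aA
    simp [zero_pow (by omega : n ≠ 0)]
  rw [h0, add_zero]
  calc ∑ k ∈ Finset.range n, aA n (k + 1) * x ^ (k + 1)
      = x * ∑ k ∈ Finset.range n, ∑ j ∈ Finset.range (n + 1),
          ((n.choose j : ℝ) * dd (n - j)) * (aA j k * x ^ k) := by
        rw [Finset.mul_sum]
        refine Finset.sum_congr rfl fun k _ => ?_
        rw [aA_succ, Finset.mul_sum, Finset.sum_mul]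
        exact Finset.sum_congr rfl fun j _ => by ring
    _ = x * ∑ j ∈ Finset.range (n + 1), ∑ k ∈ Finset.range n,
          ((n.choose j : ℝ) * dd (n - j)) * (aA j k * x ^ k) := by rw [Finset.sum_comm]
    _ = x * ∑ j ∈ Finset.range n, (n.choose j : ℝ) * dd (n - j) * centralFubini j x := by
        congr 1
        rw [Finset.sum_range_succ]
        have hlast : ∑ k ∈ Finset.range n, ((n.choose n : ℝ) * dd (n - n)) * (aA n k * x ^ k) = 0 := by
          refine Finset.sum_eq_zero fun k _ => ?_
          rw [Nat.sub_self, dd_zero]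
          ring
        rw [hlast, add_zero]
        refine Finset.sum_congr rfl fun j hj => ?_
        rw [Finset.mem_range] at hj
        rw [← Finset.mul_sum, partial_eq j n hj x, mul_assoc]

lemma coeff (n j : ℕ) (hj : j < n) :
    ∑ k ∈ Finset.range n, (n.choose k : ℝ) * ((k.choose j : ℝ) * (-1 / 2 : ℝ) ^ (k - j))
      = (n.choose j : ℝ) * dd (n - j) := by
  have h1 : ∑ k ∈ Finset.range n, (n.choose k : ℝ) * ((k.choose j : ℝ) * (-1 / 2 : ℝ) ^ (k - j))
      = ∑ k ∈ Finset.Ico j n, (n.choose k : ℝ) * ((k.choose j : ℝ) * (-1 / 2 : ℝ) ^ (k - j)) := by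
    refine (Finset.sum_subset (fun k hk => ?_) fun k hk hk' => ?_).symm
    · rw [Finset.mem_Ico] at hk; exact Finset.mem_range.mpr hk.2
    · rw [Finset.mem_range] at hk
      rw [Finset.mem_Ico, not_and_or] at hk'
      have : k < j := by omega
      rw [Nat.choose_eq_zero_of_lt this]
      push_cast
      ring
  rw [h1, Finset.sum_Ico_eq_sum_range]
  have h2 : ∀ m ∈ Finset.range (n - j),
      (n.choose (j + m) : ℝ) * (((j + m).choose j : ℝ) * (-1 / 2 : ℝ) ^ (j + m - j))
        = (n.choose j : ℝ) * (((n - j).choose m : ℝ) * (-1 / 2 : ℝ) ^ m) := by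
    intro m hm
    rw [Finset.mem_range] at hm
    have hc : n.choose (j + m) * (j + m).choose j = n.choose j * (n - j).choose m := by
      have := Nat.choose_mul (n := n) (k := j + m) (s := j) (Nat.le_add_right j m)
      simpa [Nat.add_sub_cancel_left] using this
    have : ((n.choose (j + m) * (j + m).choose j : ℕ) : ℝ) = ((n.choose j * (n - j).choose m : ℕ) : ℝ) := by
      rw [hc]
    push_cast at this
    rw [Nat.add_sub_cancel_left, ← mul_assoc, this, mul_assoc]
  rw [Finset.sum_congr rfl h2, ← Finset.mul_sum]
  congr 1
  set N := n - j with hN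
  have hN1 : 1 ≤ N := by omega
  have hadd := add_pow (-1/2 : ℝ) 1 N
  simp only [one_pow, mul_one, neg_add_cancel_comm] at hadd
  have hhalf : (-1/2 + 1 : ℝ) = 1/2 := by norm_num
  rw [hhalf] at hadd
  rw [Finset.sum_range_succ] at hadd
  simp only [Nat.choose_self, Nat.cast_one, mul_one] at hadd
  have hfin : ∑ m ∈ Finset.range N, (-1/2 : ℝ) ^ m * (N.choose m : ℝ) = dd N := by
    unfold dd
    linarith
  rw [← hfin]
  exact Finset.sum_congr rfl fun m _ => mul_comm _ _

theorem central_fubini_recurrence (n : ℕ) (hn : 1 ≤ n) (x : ℝ) :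
    centralFubini n x =
      x * ∑ k ∈ Finset.range n, (n.choose k : ℝ) *
        ∑ j ∈ Finset.range (k + 1),
          (k.choose j : ℝ) * (-1 / 2 : ℝ) ^ (k - j) * centralFubini j x ∧
    centralFubini n x =
      x * ∑ j ∈ Finset.range n, (n.choose j : ℝ) *
        ((1 / 2 : ℝ) ^ (n - j) - (-1 / 2 : ℝ) ^ (n - j)) * centralFubini j x := by
  have h2 := key2 n hn x
  have hdd : ∀ j, dd (n - j) = (1 / 2 : ℝ) ^ (n - j) - (-1 / 2 : ℝ) ^ (n - j) := fun j => rfl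
  refine ⟨?_, by simpa only [hdd] using h2⟩
  rw [h2]
  congr 1
  have hswap : ∑ k ∈ Finset.range n, (n.choose k : ℝ) *
      ∑ j ∈ Finset.range (k + 1),
        (k.choose j : ℝ) * (-1 / 2 : ℝ) ^ (k - j) * centralFubini j x
      = ∑ j ∈ Finset.range n, (n.choose j : ℝ) * dd (n - j) * centralFubini j x := by
    calc ∑ k ∈ Finset.range n, (n.choose k : ℝ) *
          ∑ j ∈ Finset.range (k + 1),
            (k.choose j : ℝ) * (-1 / 2 : ℝ) ^ (k - j) * centralFubini j x
        = ∑ k ∈ Finset.range n, ∑ j ∈ Finset.range n,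
            (n.choose k : ℝ) * ((k.choose j : ℝ) * (-1 / 2 : ℝ) ^ (k - j)) * centralFubini j x := by
          refine Finset.sum_congr rfl fun k hk => ?_
          rw [Finset.mem_range] at hk
          rw [Finset.mul_sum]
          have hext := Finset.sum_subset (Finset.range_subset_range.mpr (by omega : k + 1 ≤ n))
            (f := fun j => (n.choose k : ℝ) * ((k.choose j : ℝ) * (-1 / 2 : ℝ) ^ (k - j)) * centralFubini j x)
            (fun j hj hj' => by
              rw [Finset.mem_range] at hj hj'
              rw [Nat.choose_eq_zero_of_lt (by omega : k < j)]
              push_cast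
              ring)
          rw [← hext]
          exact Finset.sum_congr rfl fun j _ => by ring
      _ = ∑ j ∈ Finset.range n, ∑ k ∈ Finset.range n,
            (n.choose k : ℝ) * ((k.choose j : ℝ) * (-1 / 2 : ℝ) ^ (k - j)) * centralFubini j x :=
          Finset.sum_comm
      _ = ∑ j ∈ Finset.range n, (n.choose j : ℝ) * dd (n - j) * centralFubini j x := by
          refine Finset.sum_congr rfl fun j hj => ?_
          rw [Finset.mem_range] at hj
          rw [← Finset.sum_mul, coeff n j hj]
  rw [hswap]
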